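/- Lower bound for the interaction integral: let N ≥ 1, s > 0, p > 1 with p(N+2s) > N, and define f(x) = 1/(1 + |x|^{N+2s}). Then there exists c > 0 such that for all z ∈ ℝ^N with |z| ≥ 2, ∫_{ℝ^N} f(y)^p f(y − z) dy ≥ c |z|^{−(N+2s)}. -/

import Mathlib

open MeasureTheory

/-- Lower bound for the interaction integral: with `f(x) = (1+|x|^{N+2s})⁻¹`,
`∫ f(y)^p f(y−z) dy ≥ c |z|^{−(N+2s)}` for `|z| ≥ 2`. -/
theorem stmt6 (N : ℕ) (hN : 1 ≤ N) (s p : ℝ) (hs : 0 < s) (hp : 1 < p)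
    (hpN : p * ((N : ℝ) + 2 * s) > N) :
    ∃ c > 0, ∀ z : EuclideanSpace ℝ (Fin N), 2 ≤ ‖z‖ →
      c * ‖z‖ ^ (-((N : ℝ) + 2 * s)) ≤
        ∫ y, ((1 + ‖y‖ ^ ((N : ℝ) + 2 * s))⁻¹) ^ p *
          (1 + ‖y - z‖ ^ ((N : ℝ) + 2 * s))⁻¹ := by
  have hN1 : (1:ℝ) ≤ (N:ℝ) := by exact_mod_cast hN
  set α : ℝ := (N : ℝ) + 2 * s with hαdef
  have hα : 0 < α := by positivity
  have hp0 : 0 < p := by linarith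
  set B : Set (EuclideanSpace ℝ (Fin N)) := Metric.closedBall 0 1 with hBdef
  have hVpos : 0 < (volume B).toReal := by
    refine ENNReal.toReal_pos (ne_of_gt ?_) (ne_of_lt measure_closedBall_lt_top)
    exact Metric.measure_closedBall_pos volume 0 one_pos
  have h2p : (0:ℝ) < (2:ℝ) ^ p := Real.rpow_pos_of_pos two_pos p
  have h32 : (0:ℝ) < 1 + (3/2:ℝ) ^ α := by positivity
  refine ⟨((2:ℝ) ^ p)⁻¹ * (1 + (3/2:ℝ) ^ α)⁻¹ * (volume B).toReal, by positivity,
    fun z hz => ?_⟩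
  have hz0 : (0:ℝ) < ‖z‖ := by linarith
  set F : EuclideanSpace ℝ (Fin N) → ℝ :=
    fun y => ((1 + ‖y‖ ^ α)⁻¹) ^ p * (1 + ‖y - z‖ ^ α)⁻¹ with hFdef
  have hden : ∀ y : EuclideanSpace ℝ (Fin N), (0:ℝ) < 1 + ‖y‖ ^ α := by
    intro y; positivity
  have hFnonneg : ∀ y, 0 ≤ F y := by
    intro y
    have h1 := hden y
    have h2 := hden (y - z)
    positivity
  have hFmeas : AEStronglyMeasurable F volume := by
    apply Measurable.aestronglyMeasurable
    fun_prop
  -- pointwise integrable bound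
  have hbound : ∀ y : EuclideanSpace ℝ (Fin N),
      F y ≤ ((2:ℝ) ^ α) ^ p * (1 + ‖y‖) ^ (-(α * p)) := by
    intro y
    have h1 := hden y
    have h2 := hden (y - z)
    have hb : (0:ℝ) < 1 + ‖y‖ := by positivity
    have key : (1 + ‖y‖) ^ α ≤ 2 ^ α * (1 + ‖y‖ ^ α) := by
      have hmax : 1 + ‖y‖ ≤ 2 * max 1 ‖y‖ := by
        rcases le_total ‖y‖ 1 with h | h
        · rw [max_eq_left h]; linarith
        · rw [max_eq_right h]; linarith
      calc (1 + ‖y‖) ^ α ≤ (2 * max 1 ‖y‖) ^ α :=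
            Real.rpow_le_rpow (by positivity) hmax hα.le
        _ = 2 ^ α * (max 1 ‖y‖) ^ α := Real.mul_rpow (by norm_num) (by positivity)
        _ ≤ 2 ^ α * (1 + ‖y‖ ^ α) := by
            refine mul_le_mul_of_nonneg_left ?_ (by positivity)
            rcases le_total ‖y‖ 1 with h | h
            · rw [max_eq_left h, Real.one_rpow]
              have := Real.rpow_nonneg (norm_nonneg y) α
              linarith
            · rw [max_eq_right h]
              have := Real.one_le_rpow h hα.le
              linarith
    have step1 : (1 + ‖y‖ ^ α)⁻¹ ≤ 2 ^ α * (1 + ‖y‖) ^ (-α) := by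
      have h2α : (0:ℝ) < (2:ℝ) ^ α := Real.rpow_pos_of_pos two_pos α
      have hbα : (0:ℝ) < (1 + ‖y‖) ^ α := Real.rpow_pos_of_pos hb α
      rw [Real.rpow_neg hb.le]
      have hdiv : (1 + ‖y‖) ^ α / 2 ^ α ≤ 1 + ‖y‖ ^ α := by
        rw [div_le_iff₀ h2α]; linarith
      calc (1 + ‖y‖ ^ α)⁻¹ ≤ ((1 + ‖y‖) ^ α / 2 ^ α)⁻¹ :=
            inv_anti₀ (by positivity) hdiv
        _ = 2 ^ α * ((1 + ‖y‖) ^ α)⁻¹ := by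
            rw [inv_div]; ring
    have step2 : ((1 + ‖y‖ ^ α)⁻¹) ^ p ≤ ((2:ℝ) ^ α) ^ p * (1 + ‖y‖) ^ (-(α * p)) := by
      have := Real.rpow_le_rpow (by positivity) step1 hp0.le
      calc ((1 + ‖y‖ ^ α)⁻¹) ^ p ≤ (2 ^ α * (1 + ‖y‖) ^ (-α)) ^ p := this
        _ = ((2:ℝ) ^ α) ^ p * ((1 + ‖y‖) ^ (-α)) ^ p :=
            Real.mul_rpow (by positivity) (by positivity)
        _ = ((2:ℝ) ^ α) ^ p * (1 + ‖y‖) ^ (-(α * p)) := by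
            rw [← Real.rpow_mul hb.le, neg_mul]
    have hle1 : (1 + ‖y - z‖ ^ α)⁻¹ ≤ 1 := by
      rw [inv_le_one_iff₀]; right
      have := Real.rpow_nonneg (norm_nonneg (y - z)) α
      linarith
    calc F y ≤ ((1 + ‖y‖ ^ α)⁻¹) ^ p * 1 := by
          refine mul_le_mul_of_nonneg_left hle1 (by positivity)
      _ = ((1 + ‖y‖ ^ α)⁻¹) ^ p := mul_one _
      _ ≤ _ := step2
  have hint : Integrable F := by
    have hNlt : ((Module.finrank ℝ (EuclideanSpace ℝ (Fin N)) : ℝ)) < α * p := by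
      rw [finrank_euclideanSpace_fin]
      push_cast
      linarith [hpN]
    have := (integrable_one_add_norm (μ := volume) hNlt).const_mul (((2:ℝ) ^ α) ^ p)
    refine this.mono hFmeas (ae_of_all _ fun y => ?_)
    rw [Real.norm_of_nonneg (hFnonneg y), Real.norm_of_nonneg (by positivity)]
    exact hbound y
  -- lower bound on the ball
  have hlow : ∀ y ∈ B, ((2:ℝ) ^ p)⁻¹ * ((1 + (3/2:ℝ) ^ α)⁻¹ * ‖z‖ ^ (-α)) ≤ F y := by
    intro y hy
    rw [hBdef, Metric.mem_closedBall, dist_zero_right] at hy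
    have h1 : ((2:ℝ) ^ p)⁻¹ ≤ ((1 + ‖y‖ ^ α)⁻¹) ^ p := by
      have hyα : ‖y‖ ^ α ≤ 1 := Real.rpow_le_one (norm_nonneg y) hy hα.le
      have : (2:ℝ)⁻¹ ≤ (1 + ‖y‖ ^ α)⁻¹ := by
        apply inv_anti₀ (hden y); linarith
      calc ((2:ℝ) ^ p)⁻¹ = ((2:ℝ)⁻¹) ^ p := (Real.inv_rpow (by norm_num) p).symm
        _ ≤ ((1 + ‖y‖ ^ α)⁻¹) ^ p := Real.rpow_le_rpow (by norm_num) this hp0.le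
    have h2 : (1 + (3/2:ℝ) ^ α)⁻¹ * ‖z‖ ^ (-α) ≤ (1 + ‖y - z‖ ^ α)⁻¹ := by
      have hzα : (1:ℝ) ≤ ‖z‖ ^ α := Real.one_le_rpow (by linarith) hα.le
      have hyz : ‖y - z‖ ≤ (3/2) * ‖z‖ := by
        calc ‖y - z‖ ≤ ‖y‖ + ‖z‖ := norm_sub_le _ _
          _ ≤ 1 + ‖z‖ := by linarith
          _ ≤ (3/2) * ‖z‖ := by linarith
      have hyzα : ‖y - z‖ ^ α ≤ (3/2:ℝ) ^ α * ‖z‖ ^ α := by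
        calc ‖y - z‖ ^ α ≤ ((3/2) * ‖z‖) ^ α :=
              Real.rpow_le_rpow (norm_nonneg _) hyz hα.le
          _ = (3/2:ℝ) ^ α * ‖z‖ ^ α := Real.mul_rpow (by norm_num) (by positivity)
      have hsum : 1 + ‖y - z‖ ^ α ≤ (1 + (3/2:ℝ) ^ α) * ‖z‖ ^ α := by
        have h32α : (0:ℝ) ≤ (3/2:ℝ) ^ α := by positivity
        nlinarith
      rw [Real.rpow_neg hz0.le]
      calc (1 + (3/2:ℝ) ^ α)⁻¹ * (‖z‖ ^ α)⁻¹ = ((1 + (3/2:ℝ) ^ α) * ‖z‖ ^ α)⁻¹ := by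
            rw [mul_inv]
        _ ≤ (1 + ‖y - z‖ ^ α)⁻¹ := inv_anti₀ (hden (y - z)) hsum
    have hz' : (0:ℝ) ≤ (1 + (3/2:ℝ) ^ α)⁻¹ * ‖z‖ ^ (-α) := by positivity
    exact mul_le_mul h1 h2 hz' (by positivity)
  calc ((2:ℝ) ^ p)⁻¹ * (1 + (3/2:ℝ) ^ α)⁻¹ * (volume B).toReal * ‖z‖ ^ (-α)
      = (((2:ℝ) ^ p)⁻¹ * ((1 + (3/2:ℝ) ^ α)⁻¹ * ‖z‖ ^ (-α))) * (volume B).toReal := by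
        ring
    _ ≤ ∫ y in B, F y :=
        setIntegral_ge_of_const_le_real measurableSet_closedBall
          (ne_of_lt measure_closedBall_lt_top) hlow hint.integrableOn
    _ ≤ ∫ y, F y := setIntegral_le_integral hint (ae_of_all _ hFnonneg)
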